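/- Let q = (q_n)_{n≥1} be a sequence of Beurling primes with Beurling integers (ν_n)_{n≥1}, and let C_0 > 0 be such that ∑_{n≥1} ν_n^{−C_0} < ∞. Then for Lebesgue-almost every x ∈ (1,∞) there exists a constant c > 0 such that |x^j − ν_n/ν_m| ≥ c ν_n^{−C_0} ν_m^{−C_0} for all triples (j, n, m) ∈ ℕ³ with j, n, m ≥ 1. -/

import Mathlib

open Set Filter MeasureTheory

noncomputable section

/-- A sequence of Beurling primes: strictly increasing, first term `> 1`,
tending to infinity, with logarithms linearly independent over `ℚ`. -/
def IsBeurlingPrimes (q : ℕ → ℝ) : Prop :=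
  StrictMono q ∧ 1 < q 0 ∧ Tendsto q atTop atTop ∧
    LinearIndependent ℚ fun n => Real.log (q n)

/-- The set of Beurling integers: all finite products of the `q i` with
natural number exponents (including the empty product `1`). -/
def beurlingIntegers (q : ℕ → ℝ) : Set ℝ :=
  {x | ∃ e : ℕ →₀ ℕ, x = e.prod fun i k => q i ^ k}

/-- `ν` is the strictly increasing enumeration of `S`, tending to infinity. -/
def IsEnumeration (ν : ℕ → ℝ) (S : Set ℝ) : Prop :=
  StrictMono ν ∧ Tendsto ν atTop atTop ∧ (∀ n, ν n ∈ S) ∧ ∀ x ∈ S, ∃ n, ν n = x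

/-- Bohr's condition for the increasing enumeration `ν`:
`ν (n+1) - ν n ≥ c₁ * ν (n+1) ^ (-c₂)` for all `n`. -/
def BohrCondition (ν : ℕ → ℝ) : Prop :=
  ∃ c₁ > (0:ℝ), ∃ c₂ > (0:ℝ), ∀ n : ℕ, ν (n+1) - ν n ≥ c₁ * ν (n+1) ^ (-c₂)

/-- The Beurling prime counting function `π_q(x) = #{n : q_n ≤ x}`. -/
def piQ (q : ℕ → ℝ) (x : ℝ) : ℕ := Nat.card {n : ℕ | q n ≤ x}

/-- The logarithmic integral `li x = ∫_1^x (1-1/u)/log u du`. -/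
def li (x : ℝ) : ℝ := ∫ u in (1:ℝ)..x, (1 - u⁻¹) / Real.log u

/-- The abscissa of convergence `σ_c` of the Dirichlet series `∑ ν_n^{-s}`. -/
def sigmaC (ν : ℕ → ℝ) : ℝ := sInf {σ : ℝ | Summable fun n => ν n ^ (-σ)}

private lemma pow_sub_pow_ge' {A x y : ℝ} (hA : 0 < A) (hx : A ≤ x) (hxy : x ≤ y) :
    ∀ j : ℕ, (y - x) * A ^ j ≤ y ^ (j + 1) - x ^ (j + 1) := by
  intro j
  induction j with
  | zero => simp
  | succ j ih =>
    have hx0 : 0 < x := hA.trans_le hx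
    have hy : A ≤ y := hx.trans hxy
    have h0 : 0 ≤ (y - x) * A ^ j := mul_nonneg (by linarith) (pow_pos hA j).le
    have hxp : (0:ℝ) ≤ x ^ (j + 1) := (pow_pos hx0 (j + 1)).le
    calc (y - x) * A ^ (j + 1) = A * ((y - x) * A ^ j) := by ring
      _ ≤ y * ((y - x) * A ^ j) := mul_le_mul_of_nonneg_right hy h0
      _ ≤ y * (y ^ (j + 1) - x ^ (j + 1)) :=
          mul_le_mul_of_nonneg_left ih (hA.trans_le hy).le
      _ = y ^ (j + 2) - y * x ^ (j + 1) := by ring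
      _ ≤ y ^ (j + 2) - x ^ (j + 2) := by
          have : x * x ^ (j + 1) ≤ y * x ^ (j + 1) := mul_le_mul_of_nonneg_right hxy hxp
          have hxx : x ^ (j + 2) = x * x ^ (j + 1) := by ring
          linarith

private lemma abs_pow_sub_pow_ge {A x y : ℝ} (hA : 0 < A) (hx : A ≤ x) (hy : A ≤ y) (j : ℕ) :
    |x - y| * A ^ j ≤ |x ^ (j + 1) - y ^ (j + 1)| := by
  rcases le_total x y with h | h
  · rw [abs_sub_comm, abs_of_nonneg (by linarith), abs_sub_comm,
      abs_of_nonneg (by nlinarith [pow_sub_pow_ge' hA hx h j, pow_pos hA j])]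
    exact pow_sub_pow_ge' hA hx h j
  · rw [abs_of_nonneg (by linarith),
      abs_of_nonneg (by nlinarith [pow_sub_pow_ge' hA hy h j, pow_pos hA j])]
    exact pow_sub_pow_ge' hA hy h j

private lemma tsum_triple (a b d : ℕ → ENNReal) :
    ∑' t : ℕ × ℕ × ℕ, a t.1 * (b t.2.1 * d t.2.2)
      = (∑' i, a i) * ((∑' i, b i) * (∑' i, d i)) := by
  rw [ENNReal.tsum_prod']
  simp_rw [ENNReal.tsum_mul_left]
  rw [ENNReal.tsum_mul_right]
  congr 1
  rw [ENNReal.tsum_prod']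
  simp_rw [ENNReal.tsum_mul_left]
  rw [ENNReal.tsum_mul_right]

private lemma aux_ae (ν : ℕ → ℝ) (hν1 : ∀ n, 1 ≤ ν n) (C₀ : ℝ)
    (hsum : Summable fun n => ν n ^ (-C₀)) {A : ℝ} (hA : 1 < A) :
    ∀ᵐ x : ℝ ∂volume, A ≤ x →
      ∃ c > (0:ℝ), ∀ j n m : ℕ,
        |x ^ (j + 1) - ν n / ν m| ≥ c * ν n ^ (-C₀) * ν m ^ (-C₀) := by
  set w : ℕ → ℝ := fun n => ν n ^ (-C₀) with hw
  have hw0 : ∀ n, 0 < w n := fun n => Real.rpow_pos_of_pos (zero_lt_one.trans_le (hν1 n)) _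
  have hA0 : (0:ℝ) < A := zero_lt_one.trans hA
  set S : ℝ → ℕ × ℕ × ℕ → Set ℝ := fun c t =>
    {x | A ≤ x ∧ |x ^ (t.1 + 1) - ν t.2.1 / ν t.2.2| < c * w t.2.1 * w t.2.2} with hS
  -- volume bound for each bad set
  have hvol : ∀ c : ℝ, 0 < c → ∀ t : ℕ × ℕ × ℕ, volume (S c t)
      ≤ ENNReal.ofReal (2 * c) *
        (ENNReal.ofReal ((A⁻¹) ^ t.1) * (ENNReal.ofReal (w t.2.1) * ENNReal.ofReal (w t.2.2))) := by
    intro c hc t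
    obtain ⟨j, n, m⟩ := t
    refine (Real.volume_le_diam _).trans ?_
    rw [← ENNReal.ofReal_mul (hw0 n).le, ← ENNReal.ofReal_mul (pow_nonneg (inv_nonneg.2 hA0.le) j),
      ← ENNReal.ofReal_mul (by linarith : (0:ℝ) ≤ 2 * c)]
    refine EMetric.diam_le fun x hx y hy => ?_
    obtain ⟨hx1, hx2⟩ := hx
    obtain ⟨hy1, hy2⟩ := hy
    dsimp only at hx2 hy2 ⊢
    rw [edist_dist, Real.dist_eq]
    refine ENNReal.ofReal_le_ofReal ?_
    have hkey := abs_pow_sub_pow_ge hA0 hx1 hy1 j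
    have htri : |x ^ (j + 1) - y ^ (j + 1)| < 2 * (c * w n * w m) := by
      have he : x ^ (j+1) - y ^ (j+1) = (x ^ (j+1) - ν n / ν m) - (y ^ (j+1) - ν n / ν m) := by
        ring
      calc |x ^ (j + 1) - y ^ (j + 1)|
          ≤ |x ^ (j + 1) - ν n / ν m| + |y ^ (j + 1) - ν n / ν m| := by
            rw [he]; exact abs_sub _ _
        _ < 2 * (c * w n * w m) := by linarith
    have hAj : (0:ℝ) < A ^ j := pow_pos hA0 j
    have h2 : |x - y| ≤ 2 * (c * w n * w m) / A ^ j :=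
      (le_div_iff₀ hAj).mpr (hkey.trans htri.le)
    refine h2.trans (le_of_eq ?_)
    rw [inv_pow, div_eq_mul_inv]; ring
  -- the three tsum factors are finite
  set K : ENNReal := ∑' i, ENNReal.ofReal (w i) with hK
  set G : ENNReal := ∑' j : ℕ, ENNReal.ofReal ((A⁻¹) ^ j) with hG
  have hKfin : K ≠ ⊤ := by
    rw [hK, ← ENNReal.ofReal_tsum_of_nonneg (fun i => (hw0 i).le) hsum]
    exact ENNReal.ofReal_ne_top
  have hGsum : Summable fun j : ℕ => (A⁻¹) ^ j :=
    summable_geometric_of_lt_one (inv_nonneg.2 hA0.le) (inv_lt_one_of_one_lt₀ hA)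
  have hGfin : G ≠ ⊤ := by
    rw [hG, ← ENNReal.ofReal_tsum_of_nonneg (fun j => pow_nonneg (inv_nonneg.2 hA0.le) j) hGsum]
    exact ENNReal.ofReal_ne_top
  set M : ENNReal := G * (K * K) with hM
  have hMfin : M ≠ ⊤ := ENNReal.mul_ne_top hGfin (ENNReal.mul_ne_top hKfin hKfin)
  -- bound on the union of bad sets
  have hunion : ∀ c : ℝ, 0 < c →
      volume (⋃ t : ℕ × ℕ × ℕ, S c t) ≤ ENNReal.ofReal (2 * c) * M := by
    intro c hc
    refine (measure_iUnion_le _).trans ?_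
    calc ∑' t : ℕ × ℕ × ℕ, volume (S c t)
        ≤ ∑' t : ℕ × ℕ × ℕ, ENNReal.ofReal (2 * c) *
            (ENNReal.ofReal ((A⁻¹) ^ t.1) * (ENNReal.ofReal (w t.2.1) * ENNReal.ofReal (w t.2.2))) :=
          ENNReal.tsum_le_tsum fun t => hvol c hc t
      _ = ENNReal.ofReal (2 * c) * M := by
          rw [ENNReal.tsum_mul_left]
          congr 1
          exact tsum_triple (fun j => ENNReal.ofReal (A⁻¹ ^ j)) (fun n => ENNReal.ofReal (w n)) (fun m => ENNReal.ofReal (w m))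
  -- the exceptional null set
  set N : Set ℝ := ⋂ i : ℕ, ⋃ t : ℕ × ℕ × ℕ, S (1 / (i + 1)) t with hN
  have hNnull : volume N = 0 := by
    have hb : ∀ i : ℕ, volume N ≤ ENNReal.ofReal (2 * (1 / ((i : ℝ) + 1))) * M := fun i =>
      (measure_mono (Set.iInter_subset _ i)).trans (hunion _ (by positivity))
    have htend : Tendsto (fun i : ℕ => ENNReal.ofReal (2 * (1 / ((i : ℝ) + 1))) * M)
        atTop (nhds 0) := by
      have h1 : Tendsto (fun i : ℕ => 2 * (1 / ((i : ℝ) + 1))) atTop (nhds 0) := by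
        simpa using (tendsto_one_div_add_atTop_nhds_zero_nat.const_mul (2:ℝ) :
          Tendsto (fun i : ℕ => (2:ℝ) * (1 / ((i : ℝ) + 1))) atTop (nhds (2 * 0)))
      have h2 := ENNReal.Tendsto.mul_const (ENNReal.tendsto_ofReal h1) (Or.inr hMfin)
      simpa using h2
    exact le_antisymm (ge_of_tendsto' htend hb) zero_le
  rw [measure_eq_zero_iff_ae_notMem] at hNnull
  filter_upwards [hNnull] with x hx hAx
  rw [hN, Set.mem_iInter] at hx
  push_neg at hx
  obtain ⟨i, hi⟩ := hx
  rw [Set.mem_iUnion] at hi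
  push_neg at hi
  refine ⟨1 / ((i : ℝ) + 1), by positivity, fun j n m => ?_⟩
  have := hi (j, n, m)
  rw [hS, Set.mem_setOf_eq] at this
  push_neg at this
  exact this hAx

/-- For a.e. `x > 1`, all powers of `x` are uniformly polynomially separated from
all ratios of Beurling integers. -/
theorem ae_uniform_separation_from_ratios (q ν : ℕ → ℝ) (hq : IsBeurlingPrimes q)
    (hν : IsEnumeration ν (beurlingIntegers q))
    (C₀ : ℝ) (hC₀ : 0 < C₀) (hsum : Summable fun n => ν n ^ (-C₀)) :
    ∀ᵐ x : ℝ ∂volume, x ∈ Set.Ioi (1:ℝ) →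
      ∃ c > (0:ℝ), ∀ j n m : ℕ,
        |x ^ (j + 1) - ν n / ν m| ≥ c * ν n ^ (-C₀) * ν m ^ (-C₀) := by
  have hν1 : ∀ n, 1 ≤ ν n := by
    intro n
    obtain ⟨e, he⟩ := hν.2.2.1 n
    have hpr : e.prod (fun i k => q i ^ k) = ∏ i ∈ e.support, q i ^ e i := rfl
    rw [he, hpr]
    refine Finset.prod_induction _ (fun y => 1 ≤ y) (fun a b ha hb => by nlinarith)
      le_rfl fun i _ => ?_
    exact one_le_pow₀ (le_of_lt (lt_of_lt_of_le hq.2.1 (hq.1.monotone (Nat.zero_le i))))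
  have H : ∀ k : ℕ, ∀ᵐ x : ℝ ∂volume, (1 + 1 / ((k : ℝ) + 1)) ≤ x →
      ∃ c > (0:ℝ), ∀ j n m : ℕ,
        |x ^ (j + 1) - ν n / ν m| ≥ c * ν n ^ (-C₀) * ν m ^ (-C₀) := by
    intro k
    refine aux_ae ν hν1 C₀ hsum ?_
    have : (0:ℝ) < 1 / ((k : ℝ) + 1) := by positivity
    linarith
  filter_upwards [ae_all_iff.mpr H] with x hx hx1
  have hx1' : (1:ℝ) < x := hx1
  obtain ⟨k, hk⟩ := exists_nat_gt (1 / (x - 1))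
  apply hx k
  have h1 : 1 / ((k : ℝ) + 1) < x - 1 := by
    rw [one_div_lt (by positivity) (by linarith)]
    calc 1 / (x - 1) < (k : ℝ) := hk
      _ ≤ (k : ℝ) + 1 := by linarith
  linarith
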